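/- Let E be a finite-dimensional real inner product space, D ⊆ E a subspace, and A₁, …, A_k : E → E symmetric linear operators such that ⟨A_i x, y⟩ = 0 for all x, y ∈ D and all i = 1, …, k. Then dim (D ∩ ⋂_{i=1}^{k} ker A_i) ≥ dim D − k (dim E − dim D). -/
import Mathlib


open Module
open scoped InnerProductSpace

/-- if `A₁, …, A_k` are symmetric operators on `E` with `⟨A_i x, y⟩ = 0`
for all `x, y ∈ D`, then `dim (D ∩ ⋂ᵢ ker Aᵢ) ≥ dim D - k (dim E - dim D)`. -/
theorem stmt14 {E : Type*} [NormedAddCommGroup E] [InnerProductSpace ℝ E]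
    [FiniteDimensional ℝ E] (k : ℕ)
    (A : Fin k → E →ₗ[ℝ] E)
    (hAsymm : ∀ i : Fin k, ∀ x y : E, ⟪A i x, y⟫_ℝ = ⟪x, A i y⟫_ℝ)
    (D : Submodule ℝ E) (hD : ∀ i : Fin k, ∀ x ∈ D, ∀ y ∈ D, ⟪A i x, y⟫_ℝ = 0) :
    (finrank ℝ ↥(D ⊓ ⨅ i : Fin k, LinearMap.ker (A i)) : ℤ) ≥
      (finrank ℝ ↥D : ℤ) - k * ((finrank ℝ E : ℤ) - (finrank ℝ ↥D : ℤ)) := by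
  -- For x ∈ D, A i x ∈ Dᗮ
  have hmem : ∀ (i : Fin k) (x : D), A i (x : E) ∈ Dᗮ := by
    intro i x
    intro y hy
    rw [real_inner_comm]
    exact hD i x x.2 y hy
  -- the map L : D → (Fin k → Dᗮ)
  let f : ∀ i : Fin k, D →ₗ[ℝ] Dᗮ := fun i =>
    LinearMap.codRestrict Dᗮ ((A i).comp D.subtype) (hmem i)
  let L : D →ₗ[ℝ] (Fin k → Dᗮ) := LinearMap.pi f
  have hker : LinearMap.ker L = Submodule.comap D.subtype (⨅ i : Fin k, LinearMap.ker (A i)) := by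
    ext x
    simp [L, f, LinearMap.mem_ker, funext_iff, Submodule.mem_iInf, Subtype.ext_iff,
      LinearMap.codRestrict]
  have hcomap : Submodule.comap D.subtype (⨅ i : Fin k, LinearMap.ker (A i)) =
      Submodule.comap D.subtype (D ⊓ ⨅ i : Fin k, LinearMap.ker (A i)) := by
    ext x
    simp [x.2]
  have h1 : finrank ℝ ↥(D ⊓ ⨅ i : Fin k, LinearMap.ker (A i)) = finrank ℝ (LinearMap.ker L) := by
    rw [hker, hcomap]
    exact (LinearEquiv.finrank_eq (Submodule.comapSubtypeEquivOfLe inf_le_left)).symm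
  have h2 : finrank ℝ (LinearMap.range L) + finrank ℝ (LinearMap.ker L) = finrank ℝ D :=
    LinearMap.finrank_range_add_finrank_ker L
  have h3 : finrank ℝ (LinearMap.range L) ≤ k * finrank ℝ Dᗮ := by
    calc finrank ℝ (LinearMap.range L) ≤ finrank ℝ (Fin k → Dᗮ) :=
          (LinearMap.range L).finrank_le
      _ = k * finrank ℝ Dᗮ := by simp [Module.finrank_pi_fintype, Finset.sum_const, mul_comm]
  have h4 : finrank ℝ D + finrank ℝ Dᗮ = finrank ℝ E :=
    Submodule.finrank_add_finrank_orthogonal D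
  have h4' : (finrank ℝ E : ℤ) - (finrank ℝ ↥D : ℤ) = (finrank ℝ ↥Dᗮ : ℤ) := by
    push_cast [← h4]; ring
  rw [h1, h4']
  have h3' : (finrank ℝ (LinearMap.range L) : ℤ) ≤ (k : ℤ) * (finrank ℝ ↥Dᗮ : ℤ) := by
    exact_mod_cast h3
  have h2' : (finrank ℝ (LinearMap.range L) : ℤ) + (finrank ℝ (LinearMap.ker L) : ℤ)
      = (finrank ℝ ↥D : ℤ) := by exact_mod_cast h2
  linarith
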